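/- Let R be a discrete valuation ring with maximal ideal m, let I = m^d be a nonzero proper ideal, and let H be a finite R-module such that H[m] ⊆ IH (equivalently, H is the I-closure of IH, i.e., every elementary divisor exponent of H exceeds d). Let M be a finite R-module. Then any surjective R-module homomorphism φ: IM → IH extends to a surjective R-module homomorphism ψ: M → H with ψ restricted to IM equal to φ. -/

import Mathlib

open IsLocalRing

lemma aux_memq {R : Type*} [CommRing R] (q : R) {N : Type*} [AddCommGroup N] [Module R N]
    (x : N) :
    x ∈ (Ideal.span {q} : Ideal R) • (⊤ : Submodule R N) ↔ ∃ y, q • y = x := by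
  constructor
  · intro hx
    rw [Submodule.ideal_span_singleton_smul, ← SetLike.mem_coe,
      Submodule.coe_pointwise_smul, Set.mem_smul_set] at hx
    obtain ⟨y, -, hy⟩ := hx
    exact ⟨y, hy⟩
  · rintro ⟨y, rfl⟩
    exact Submodule.smul_mem_smul (Ideal.mem_span_singleton_self q) trivial

lemma aux_torsion {R : Type*} [CommRing R] [IsDomain R] {ϖ : R} (hϖ : Irreducible ϖ)
    (N : Type*) [AddCommGroup N] [Module R N] [Finite N] : Module.IsTorsion R N := by
  intro x
  have key : ∀ a b : ℕ, a < b → ϖ ^ a • x = ϖ ^ b • x →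
      ∃ c : nonZeroDivisors R, c • x = 0 := by
    intro a b h heq
    have hne : ϖ ^ a * ((1 : R) - ϖ ^ (b - a)) ≠ 0 := by
      apply mul_ne_zero (pow_ne_zero _ hϖ.ne_zero)
      intro h0
      have h1 : ϖ ^ (b - a) = 1 := by linear_combination -h0
      exact hϖ.not_isUnit (IsUnit.of_pow_eq_one h1 (by omega))
    refine ⟨⟨_, mem_nonZeroDivisors_of_ne_zero hne⟩, ?_⟩
    show (ϖ ^ a * ((1 : R) - ϖ ^ (b - a))) • x = 0
    rw [mul_smul, sub_smul, one_smul, smul_sub, smul_smul, ← pow_add,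
      Nat.add_sub_cancel' h.le, ← heq, sub_self]
  obtain ⟨a, b, hab, heq⟩ := Finite.exists_ne_map_eq_of_infinite (fun n : ℕ => ϖ ^ n • x)
  rcases hab.lt_or_gt with h | h
  · exact key a b h heq
  · exact key b a h heq.symm

lemma aux_decomp {R : Type u} [CommRing R] [IsDomain R] [IsPrincipalIdealRing R]
    (N : Type v) [AddCommGroup N] [Module R N] [Finite N] (hN : Module.IsTorsion R N) :
    ∃ (ι : Type u) (_ : Fintype ι) (p : ι → R) (_ : ∀ i, Irreducible (p i)) (e : ι → ℕ),
      Nonempty (N ≃ₗ[R] DirectSum ι (fun i => R ⧸ R ∙ p i ^ e i)) := by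
  have hN' : Module.IsTorsion R (ULift.{u} N) := by
    intro x
    obtain ⟨a, ha⟩ := @hN x.down
    exact ⟨a, ULift.ext _ _ (by simpa using ha)⟩
  obtain ⟨ι, hι, p, hp, e, ⟨e'⟩⟩ :=
    Module.equiv_directSum_of_isTorsion (M := ULift.{u} N) hN'
  exact ⟨ι, hι, p, hp, e, ⟨(ULift.moduleEquiv.symm.trans e')⟩⟩

/-- Over a DVR `R` with `I = 𝔪^d` (`d ≥ 1`), if `H` is a finite `R`-module with
`H[𝔪] ⊆ IH`, then any surjection `φ : IM ↠ IH` extends to a surjection `ψ : M ↠ H`. -/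
theorem stmt_8 (R : Type*) [CommRing R] [IsDomain R] [IsDiscreteValuationRing R]
    (d : ℕ) (hd : 1 ≤ d) (I : Ideal R) (hI : I = (IsLocalRing.maximalIdeal R) ^ d)
    (H : Type*) [AddCommGroup H] [Module R H] [Finite H]
    (htors : Submodule.torsionBySet R H ((IsLocalRing.maximalIdeal R : Ideal R) : Set R) ≤
      I • (⊤ : Submodule R H))
    (M : Type*) [AddCommGroup M] [Module R M] [Finite M]
    (φ : ↥(I • (⊤ : Submodule R M)) →ₗ[R] ↥(I • (⊤ : Submodule R H)))
    (hφ : Function.Surjective φ) :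
    ∃ ψ : M →ₗ[R] H, Function.Surjective ψ ∧
      ∀ x : ↥(I • (⊤ : Submodule R M)), ψ (x : M) = ((φ x : ↥(I • (⊤ : Submodule R H))) : H) := by
  classical
  obtain ⟨ϖ, hϖ⟩ := IsDiscreteValuationRing.exists_irreducible R
  have hm : maximalIdeal R = Ideal.span {ϖ} := hϖ.maximalIdeal_eq
  set q : R := ϖ ^ d with hq
  have hIq : I = Ideal.span {q} := by rw [hI, hm, Ideal.span_singleton_pow]
  have memM : ∀ x : M, x ∈ I • (⊤ : Submodule R M) ↔ ∃ y, q • y = x := by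
    intro x; rw [hIq]; exact aux_memq q x
  have memH : ∀ x : H, x ∈ I • (⊤ : Submodule R H) ↔ ∃ y, q • y = x := by
    intro x; rw [hIq]; exact aux_memq q x
  have hcod : ∀ x : M, q • x ∈ I • (⊤ : Submodule R M) := fun x => (memM _).mpr ⟨x, rfl⟩
  let μ : M →ₗ[R] ↥(I • (⊤ : Submodule R M)) :=
    LinearMap.codRestrict _ (LinearMap.lsmul R M q) hcod
  let f : M →ₗ[R] H := (Submodule.subtype _) ∘ₗ (φ ∘ₗ μ)
  have hf : ∀ x : M, f x = ((φ ⟨q • x, hcod x⟩ : ↥(I • (⊤ : Submodule R H))) : H) :=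
    fun x => rfl
  have hf0 : ∀ x : M, q • x = 0 → f x = 0 := by
    intro x hx
    rw [hf]
    have h1 : (⟨q • x, hcod x⟩ : ↥(I • (⊤ : Submodule R M))) = 0 := Subtype.ext hx
    rw [h1, map_zero]
    rfl
  obtain ⟨ι, hι, p, hp, e, ⟨E⟩⟩ := aux_decomp (R := R) M (aux_torsion hϖ M)
  let b : ι → M := fun j =>
    E.symm (DirectSum.lof R ι (fun i => R ⧸ R ∙ p i ^ e i) j (Submodule.Quotient.mk 1))
  have hpϖ : ∀ j, Associated (ϖ ^ e j) (p j ^ e j) :=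
    fun j => (IsDiscreteValuationRing.associated_of_irreducible R hϖ (hp j)).pow_pow
  have hbj : ∀ j, ϖ ^ e j • b j = 0 := by
    intro j
    show ϖ ^ e j • E.symm _ = 0
    rw [← LinearEquiv.map_smul, ← LinearMap.map_smul, ← Submodule.Quotient.mk_smul]
    have h1 : (ϖ ^ e j • (1 : R)) ∈ (R ∙ p j ^ e j) := by
      rw [smul_eq_mul, mul_one, Submodule.mem_span_singleton]
      obtain ⟨u, hu⟩ := (hpϖ j).symm
      exact ⟨u, by rw [← hu, mul_comm]; rfl⟩
    rw [(Submodule.Quotient.mk_eq_zero _).mpr h1, map_zero, map_zero]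
  have hc : ∀ j, ∃ c : H, q • c = f (b j) ∧ ϖ ^ e j • c = 0 := by
    intro j
    rcases le_or_gt d (e j) with hde | hde
    · have hmem : f (b j) ∈ I • (⊤ : Submodule R H) := by
        rw [hf]; exact SetLike.coe_mem _
      obtain ⟨w, hw⟩ := (memH _).mp hmem
      refine ⟨w, hw, ?_⟩
      have h1 : ϖ ^ e j • w = ϖ ^ (e j - d) • (q • w) := by
        rw [smul_smul, hq, ← pow_add, Nat.sub_add_cancel hde]
      rw [h1, hw, ← map_smul]
      apply hf0
      rw [smul_smul, hq, ← pow_add]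
      have h2 : d + (e j - d) = e j := by omega
      rw [h2, hbj j]
    · refine ⟨0, ?_, smul_zero _⟩
      rw [smul_zero]
      symm
      apply hf0
      have h1 : q • b j = ϖ ^ (d - e j) • (ϖ ^ e j • b j) := by
        rw [smul_smul, hq, ← pow_add, Nat.sub_add_cancel hde.le]
      rw [h1, hbj, smul_zero]
  choose c hc1 hc2 using hc
  have hker : ∀ j, (R ∙ p j ^ e j) ≤ LinearMap.ker (LinearMap.toSpanSingleton R H (c j)) := by
    intro j
    rw [Submodule.span_le, Set.singleton_subset_iff]
    simp only [SetLike.mem_coe, LinearMap.mem_ker, LinearMap.toSpanSingleton_apply]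
    obtain ⟨u, hu⟩ := hpϖ j
    rw [← hu, mul_comm, mul_smul, hc2, smul_zero]
  let g : ∀ j, (R ⧸ (R ∙ p j ^ e j)) →ₗ[R] H := fun j =>
    Submodule.liftQ _ (LinearMap.toSpanSingleton R H (c j)) (hker j)
  let ψ0 : (DirectSum ι (fun i => R ⧸ R ∙ p i ^ e i)) →ₗ[R] H := DirectSum.toModule R ι H g
  let ψ : M →ₗ[R] H := ψ0 ∘ₗ E.toLinearMap
  have hψb : ∀ j, ψ (b j) = c j := by
    intro j
    show ψ0 (E (E.symm _)) = c j
    rw [LinearEquiv.apply_symm_apply]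
    show DirectSum.toModule R ι H g _ = c j
    rw [DirectSum.toModule_lof]
    show LinearMap.toSpanSingleton R H (c j) 1 = c j
    rw [LinearMap.toSpanSingleton_apply, one_smul]
  have key : ∀ y : M, q • ψ y = f y := by
    have h2 : ((LinearMap.lsmul R H q) ∘ₗ ψ) ∘ₗ E.symm.toLinearMap
        = f ∘ₗ E.symm.toLinearMap := by
      apply DirectSum.linearMap_ext
      intro j
      apply Submodule.linearMap_qext
      apply LinearMap.ext_ring
      simp only [LinearMap.comp_apply, Submodule.mkQ_apply, LinearMap.lsmul_apply,
        LinearEquiv.coe_coe]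
      show q • ψ (b j) = f (b j)
      rw [hψb, hc1]
    intro y
    have h3 := LinearMap.congr_fun h2 (E y)
    simpa using h3
  have hext : ∀ x : ↥(I • (⊤ : Submodule R M)), ψ (x : M) = ((φ x : _) : H) := by
    rintro ⟨x, hx⟩
    obtain ⟨y, rfl⟩ := (memM x).mp hx
    show ψ (q • y) = _
    rw [map_smul, key y, hf]
  have hstep1 : ∀ h : H, ∃ y : M, q • (h - ψ y) = 0 := by
    intro h
    obtain ⟨x, hx⟩ := hφ ⟨q • h, (memH _).mpr ⟨h, rfl⟩⟩
    obtain ⟨y, hy⟩ := (memM x.1).mp x.2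
    refine ⟨y, ?_⟩
    have h1 : q • ψ y = q • h := by
      rw [key y, hf]
      have h2 : (⟨q • y, hcod y⟩ : ↥(I • (⊤ : Submodule R M))) = x := Subtype.ext hy
      rw [h2, hx]
    rw [smul_sub, h1, sub_self]
  have hsoc : ∀ k, k ≤ d → ∀ h : H, ϖ ^ k • h = 0 →
      h ∈ (maximalIdeal R) • (⊤ : Submodule R H) := by
    intro k
    induction k with
    | zero =>
      intro _ h h0
      rw [pow_zero, one_smul] at h0
      rw [h0]; exact zero_mem _
    | succ k ih =>
      intro hkd h h0
      have htor : ϖ ^ k • h ∈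
          Submodule.torsionBySet R H ((maximalIdeal R : Ideal R) : Set R) := by
        rw [Submodule.mem_torsionBySet_iff]
        rintro ⟨a, ha⟩
        rw [hm] at ha
        obtain ⟨r, rfl⟩ := Ideal.mem_span_singleton.mp ha
        show (ϖ * r) • ϖ ^ k • h = 0
        rw [smul_smul, show ϖ * r * ϖ ^ k = r * ϖ ^ (k + 1) by ring, mul_smul, h0, smul_zero]
      obtain ⟨w, hw⟩ := (memH _).mp (htors htor)
      have h2 : ϖ ^ k • (h - ϖ ^ (d - k) • w) = 0 := by
        rw [smul_sub, smul_smul, ← pow_add]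
        have h3 : k + (d - k) = d := by omega
        rw [h3, ← hq, hw, sub_self]
      have h3 := ih (by omega) _ h2
      have h4 : ϖ ^ (d - k) • w ∈ maximalIdeal R • (⊤ : Submodule R H) := by
        have h5 : ϖ ^ (d - k) • w = ϖ • (ϖ ^ (d - k - 1) • w) := by
          rw [smul_smul, ← pow_succ', Nat.sub_add_cancel (by omega : 1 ≤ d - k)]
        rw [h5]
        exact Submodule.smul_mem_smul (hm ▸ Ideal.mem_span_singleton_self ϖ) trivial
      simpa using add_mem h3 h4
  have hsurj : Function.Surjective ψ := by
    rw [← LinearMap.range_eq_top]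
    have htop : (⊤ : Submodule R H) ≤
        LinearMap.range ψ ⊔ (maximalIdeal R) • (⊤ : Submodule R H) := by
      intro h _
      obtain ⟨y, hy⟩ := hstep1 h
      have h1 : h - ψ y ∈ maximalIdeal R • (⊤ : Submodule R H) := hsoc d le_rfl _ hy
      exact Submodule.mem_sup.mpr ⟨ψ y, ⟨y, rfl⟩, h - ψ y, h1, by abel⟩
    have h6 := Submodule.le_of_le_smul_of_le_jacobson_bot
      Module.Finite.fg_top (IsLocalRing.maximalIdeal_le_jacobson ⊥) htop
    exact top_le_iff.mp h6
  exact ⟨ψ, hsurj, hext⟩
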